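/- Let A be a unital complex Banach algebra, τ : A → F continuous tracial linear, and u ∈ A with ‖u - 1‖ < 1 and ‖u⁻¹ - 1‖ < 1 (u invertible). Then L_τ(u⁻¹) = -L_τ(u), where L_τ(w) = (1/(2πi))τ(log w). -/

import Mathlib

open scoped Topology

section Key

variable {A : Type*} [NormedRing A] [NormedAlgebra ℂ A] [CompleteSpace A]

set_option maxHeartbeats 1000000 in
/-- Key algebraic-analytic lemma: if `x` and `y` commute, have norms `< 1`, and satisfy
`x + y = x * y`, then the two "log" series sum to zero. -/
lemma key_log_sum {x y : A} (hcxy : Commute x y) (hx : ‖x‖ < 1) (hy : ‖y‖ < 1)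
    (hrel : x + y = x * y) :
    (∑' n : ℕ, ((n : ℝ) + 1)⁻¹ • x ^ (n + 1)) + (∑' n : ℕ, ((n : ℝ) + 1)⁻¹ • y ^ (n + 1)) = 0 := by
  set w : A := x * y with hw
  set r : ℝ := max (max ‖x‖ ‖y‖) 2⁻¹ with hrdef
  have hxr : ‖x‖ ≤ r := le_max_of_le_left (le_max_left _ _)
  have hyr : ‖y‖ ≤ r := le_max_of_le_left (le_max_right _ _)
  have hr0 : (0:ℝ) < r := lt_of_lt_of_le (by norm_num) (le_max_right _ _)
  have hr1 : r < 1 := max_lt (max_lt hx hy) (by norm_num)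
  have hwr : ‖w‖ ≤ r ^ 2 := by
    calc ‖w‖ ≤ ‖x‖ * ‖y‖ := norm_mul_le _ _
    _ ≤ r * r := mul_le_mul hxr hyr (norm_nonneg _) hr0.le
    _ = r ^ 2 := (sq r).symm
  set δ : ℝ := (1 - r) / 2 with hδdef
  have hδ0 : 0 < δ := by simp only [hδdef]; linarith
  have hδ4 : δ ≤ 4⁻¹ := by
    have : 2⁻¹ ≤ r := le_max_right _ _
    simp only [hδdef]; linarith
  set q : ℝ := (1 + δ) * r with hqdef
  have hrq : r ≤ q := by simp only [hqdef]; nlinarith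
  have hq0 : 0 < q := lt_of_lt_of_le hr0 hrq
  have hq1 : q < 1 := by simp only [hqdef, hδdef]; nlinarith
  have hqq : q ^ 2 ≤ q := by nlinarith
  set s : Set ℝ := Set.Ioo (-δ) (1 + δ) with hsdef
  have h0s : (0:ℝ) ∈ s := ⟨by linarith, by linarith⟩
  have h1s : (1:ℝ) ∈ s := ⟨by linarith, by linarith⟩
  -- the functions and their derivatives
  set g : ℕ → ℝ → A := fun n t =>
    (((n : ℝ) + 1)⁻¹ * t ^ (n + 1)) • (x ^ (n + 1) + y ^ (n + 1)) -
      (((n : ℝ) + 1)⁻¹ * (t * (1 - t)) ^ (n + 1)) • w ^ (n + 1) with hgdef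
  set g' : ℕ → ℝ → A := fun n t =>
    (t ^ n) • (x ^ (n + 1) + y ^ (n + 1)) -
      ((1 - 2 * t) * (t * (1 - t)) ^ n) • w ^ (n + 1) with hg'def
  have hderiv : ∀ (n : ℕ) (t : ℝ), HasDerivAt (g n) (g' n t) t := by
    intro n t
    have hn1 : ((n : ℝ) + 1) ≠ 0 := by positivity
    have h1 : HasDerivAt (fun t : ℝ => ((n : ℝ) + 1)⁻¹ * t ^ (n + 1)) (t ^ n) t := by
      have := (hasDerivAt_pow (n + 1) t).const_mul (((n : ℝ) + 1)⁻¹)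
      refine this.congr_deriv ?_
      simp only [Nat.add_sub_cancel, Nat.cast_add, Nat.cast_one]
      field_simp
    have hb : HasDerivAt (fun t : ℝ => t * (1 - t)) (1 - 2 * t) t := by
      have := (hasDerivAt_id t).mul ((hasDerivAt_const t (1:ℝ)).sub (hasDerivAt_id t))
      refine this.congr_deriv ?_
      simp only [id_eq, Pi.sub_apply]
      ring
    have h2 : HasDerivAt (fun t : ℝ => ((n : ℝ) + 1)⁻¹ * (t * (1 - t)) ^ (n + 1))
        ((1 - 2 * t) * (t * (1 - t)) ^ n) t := by
      have := (hb.pow (n + 1)).const_mul (((n : ℝ) + 1)⁻¹)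
      refine this.congr_deriv ?_
      simp only [Nat.add_sub_cancel, Nat.cast_add, Nat.cast_one]
      field_simp
    exact (h1.smul_const _).sub (h2.smul_const _)
  -- bounds on the derivatives
  have hbound : ∀ (n : ℕ), ∀ t ∈ s, ‖g' n t‖ ≤ 5 * q ^ n := by
    intro n t ht
    obtain ⟨ht1, ht2⟩ := ht
    have habs : |t| ≤ 1 + δ := abs_le.2 ⟨by linarith, by linarith⟩
    have habs2 : |1 - t| ≤ 1 + δ := abs_le.2 ⟨by linarith, by linarith⟩
    have habs3 : |1 - 2 * t| ≤ 3 := abs_le.2 ⟨by linarith, by linarith⟩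
    have hnormsum : ‖x ^ (n + 1) + y ^ (n + 1)‖ ≤ 2 * r ^ n := by
      calc ‖x ^ (n + 1) + y ^ (n + 1)‖ ≤ ‖x ^ (n + 1)‖ + ‖y ^ (n + 1)‖ := norm_add_le _ _
      _ ≤ ‖x‖ ^ (n + 1) + ‖y‖ ^ (n + 1) :=
          add_le_add (norm_pow_le' _ n.succ_pos) (norm_pow_le' _ n.succ_pos)
      _ ≤ r ^ (n + 1) + r ^ (n + 1) :=
          add_le_add (pow_le_pow_left₀ (norm_nonneg _) hxr _)
            (pow_le_pow_left₀ (norm_nonneg _) hyr _)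
      _ ≤ r ^ n + r ^ n :=
          add_le_add (pow_le_pow_of_le_one hr0.le hr1.le (Nat.le_succ n))
            (pow_le_pow_of_le_one hr0.le hr1.le (Nat.le_succ n))
      _ = 2 * r ^ n := by ring
    have e1 : ‖(t ^ n) • (x ^ (n + 1) + y ^ (n + 1))‖ ≤ 2 * q ^ n := by
      rw [norm_smul, Real.norm_eq_abs, abs_pow]
      calc |t| ^ n * ‖x ^ (n + 1) + y ^ (n + 1)‖
          ≤ (1 + δ) ^ n * (2 * r ^ n) :=
            mul_le_mul (pow_le_pow_left₀ (abs_nonneg t) habs n) hnormsum (norm_nonneg _)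
              (by positivity)
        _ = 2 * ((1 + δ) * r) ^ n := by rw [mul_pow]; ring
        _ = 2 * q ^ n := by rw [← hqdef]
    have hw1 : ‖w ^ (n + 1)‖ ≤ (r ^ 2) ^ n := by
      calc ‖w ^ (n + 1)‖ ≤ ‖w‖ ^ (n + 1) := norm_pow_le' _ n.succ_pos
      _ ≤ (r ^ 2) ^ (n + 1) := pow_le_pow_left₀ (norm_nonneg _) hwr _
      _ ≤ (r ^ 2) ^ n := pow_le_pow_of_le_one (by positivity) (by nlinarith) (Nat.le_succ n)
    have e2 : ‖((1 - 2 * t) * (t * (1 - t)) ^ n) • w ^ (n + 1)‖ ≤ 3 * q ^ n := by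
      rw [norm_smul, Real.norm_eq_abs, abs_mul, abs_pow, abs_mul]
      calc |1 - 2 * t| * (|t| * |1 - t|) ^ n * ‖w ^ (n + 1)‖
          ≤ 3 * ((1 + δ) * (1 + δ)) ^ n * (r ^ 2) ^ n := by
            have h1 : (|t| * |1 - t|) ^ n ≤ ((1 + δ) * (1 + δ)) ^ n :=
              pow_le_pow_left₀ (by positivity)
                (mul_le_mul habs habs2 (abs_nonneg _) (by linarith)) n
            exact mul_le_mul (mul_le_mul habs3 h1 (by positivity) (by norm_num)) hw1
              (norm_nonneg _) (by positivity)
        _ = 3 * (q ^ 2) ^ n := by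
            rw [mul_assoc, ← mul_pow,
              show ((1 + δ) * (1 + δ)) * (r ^ 2) = ((1 + δ) * r) ^ 2 by ring, ← hqdef]
        _ ≤ 3 * q ^ n := by
            have h : (q ^ 2) ^ n ≤ q ^ n := pow_le_pow_left₀ (by positivity) hqq n
            linarith
    calc ‖g' n t‖ ≤ ‖(t ^ n) • (x ^ (n + 1) + y ^ (n + 1))‖ +
        ‖((1 - 2 * t) * (t * (1 - t)) ^ n) • w ^ (n + 1)‖ := norm_sub_le _ _
      _ ≤ 2 * q ^ n + 3 * q ^ n := add_le_add e1 e2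
      _ = 5 * q ^ n := by ring
  have hu : Summable (fun n : ℕ => 5 * q ^ n) :=
    (summable_geometric_of_lt_one hq0.le hq1).mul_left 5
  have hgzero : ∀ n : ℕ, g n 0 = 0 := by
    intro n
    simp [hgdef, zero_pow (Nat.succ_ne_zero n)]
  have hg0 : Summable (fun n : ℕ => g n 0) := by
    apply summable_zero.congr
    intro n
    exact (hgzero n).symm
  -- the sum function has derivative `∑' n, g' n t` on `s`
  have hG : ∀ t ∈ s, HasDerivAt (fun u => ∑' n, g n u) (∑' n, g' n t) t := fun t ht =>
    hasDerivAt_tsum_of_isPreconnected hu isOpen_Ioo (convex_Ioo _ _).isPreconnected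
      (fun n u _ => hderiv n u) hbound h0s hg0 ht
  -- the derivative vanishes on `s`
  have hzero : ∀ t ∈ s, (∑' n, g' n t) = 0 := by
    intro t ht
    obtain ⟨ht1, ht2⟩ := ht
    have habs : |t| ≤ 1 + δ := abs_le.2 ⟨by linarith, by linarith⟩
    have habs2 : |1 - t| ≤ 1 + δ := abs_le.2 ⟨by linarith, by linarith⟩
    set a : A := t • x with hadef
    set b : A := t • y with hbdef
    set c : A := (t * (1 - t)) • w with hcdef
    have ha : ‖a‖ < 1 := by
      rw [hadef, norm_smul, Real.norm_eq_abs]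
      calc |t| * ‖x‖ ≤ (1 + δ) * r := mul_le_mul habs hxr (norm_nonneg _) (by linarith)
      _ < 1 := hq1
    have hb : ‖b‖ < 1 := by
      rw [hbdef, norm_smul, Real.norm_eq_abs]
      calc |t| * ‖y‖ ≤ (1 + δ) * r := mul_le_mul habs hyr (norm_nonneg _) (by linarith)
      _ < 1 := hq1
    have hcn : ‖c‖ < 1 := by
      rw [hcdef, norm_smul, Real.norm_eq_abs, abs_mul]
      calc |t| * |1 - t| * ‖w‖ ≤ ((1 + δ) * (1 + δ)) * (r ^ 2) := by
            apply mul_le_mul ?_ hwr (norm_nonneg _) (by positivity)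
            exact mul_le_mul habs habs2 (abs_nonneg _) (by linarith)
      _ = q ^ 2 := by rw [hqdef]; ring
      _ ≤ q := hqq
      _ < 1 := hq1
    set ga : A := ∑' n : ℕ, a ^ n with hgadef
    set gb : A := ∑' n : ℕ, b ^ n with hgbdef
    set gc : A := ∑' n : ℕ, c ^ n with hgcdef
    -- the three geometric sums
    have S1 : HasSum (fun n : ℕ => (t ^ n) • x ^ (n + 1)) (x * ga) := by
      have h := (summable_geometric_of_norm_lt_one ha).hasSum.mul_left x
      have hfe : (fun n : ℕ => (t ^ n) • x ^ (n + 1)) = fun n => x * a ^ n := by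
        funext n
        rw [hadef, smul_pow, mul_smul_comm, ← pow_succ']
      rw [hfe]
      exact h
    have S2 : HasSum (fun n : ℕ => (t ^ n) • y ^ (n + 1)) (y * gb) := by
      have h := (summable_geometric_of_norm_lt_one hb).hasSum.mul_left y
      have hfe : (fun n : ℕ => (t ^ n) • y ^ (n + 1)) = fun n => y * b ^ n := by
        funext n
        rw [hbdef, smul_pow, mul_smul_comm, ← pow_succ']
      rw [hfe]
      exact h
    have S3 : HasSum (fun n : ℕ => ((1 - 2 * t) * (t * (1 - t)) ^ n) • w ^ (n + 1))
        ((1 - 2 * t) • (w * gc)) := by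
      have h := ((summable_geometric_of_norm_lt_one hcn).hasSum.mul_left w).const_smul (1 - 2 * t)
      have hfe : (fun n : ℕ => ((1 - 2 * t) * (t * (1 - t)) ^ n) • w ^ (n + 1)) =
          fun n => (1 - 2 * t) • (w * c ^ n) := by
        funext n
        rw [hcdef, smul_pow, mul_smul_comm, ← pow_succ', smul_smul]
      rw [hfe]
      exact h
    -- the algebraic identity
    have hab : (1 - a) * (1 - b) = 1 - c := by
      have h1 : a * b = (t * t) • w := by
        rw [hadef, hbdef, smul_mul_assoc, mul_smul_comm, smul_smul, hw]
      have h2 : a + b = t • w := by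
        rw [hadef, hbdef, ← smul_add, hrel, hw]
      have h3 : c = t • w - (t * t) • w := by
        rw [hcdef, ← sub_smul]
        congr 1
        ring
      rw [sub_mul, one_mul, mul_sub, mul_one, h1, h3, ← h2]
      abel
    have hca : Commute a b := (hcxy.smul_left t).smul_right t
    have hcomm1ab : (1 - a) * (1 - b) = (1 - b) * (1 - a) :=
      (Commute.sub_left (Commute.one_left _) ((Commute.one_right a).sub_right hca)).eq
    have hmain : x * ga + y * gb = (1 - 2 * t) • (w * gc) := by
      have hgau : ga * (1 - a) = 1 := geom_series_mul_neg a ha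
      have hgbu : gb * (1 - b) = 1 := geom_series_mul_neg b hb
      have hgcu : gc * (1 - c) = 1 := geom_series_mul_neg c hcn
      have hl : (x * ga + y * gb) * (1 - c) = (1 - 2 * t) • w := by
        rw [← hab, add_mul]
        have t1 : x * ga * ((1 - a) * (1 - b)) = x * (1 - b) := by
          rw [← mul_assoc, mul_assoc x ga (1 - a), hgau, mul_one]
        have t2 : y * gb * ((1 - a) * (1 - b)) = y * (1 - a) := by
          rw [hcomm1ab, ← mul_assoc, mul_assoc y gb (1 - b), hgbu, mul_one]
        rw [t1, t2]
        have e1 : x * (1 - b) = x - t • w := by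
          rw [hbdef, mul_sub, mul_one, mul_smul_comm, hw]
        have e2 : y * (1 - a) = y - t • w := by
          rw [hadef, mul_sub, mul_one, mul_smul_comm, ← hcxy.eq, hw]
        rw [e1, e2, sub_add_sub_comm, hrel, sub_smul, one_smul]
        have : (2 * t) • w = t • w + t • w := by
          rw [← add_smul]
          congr 1
          ring
        rw [this]
      have hr' : ((1 - 2 * t) • (w * gc)) * (1 - c) = (1 - 2 * t) • w := by
        rw [smul_mul_assoc, mul_assoc, hgcu, mul_one]
      exact (isUnit_one_sub_of_norm_lt_one hcn).mul_right_cancel (hl.trans hr'.symm)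
    have hfe : ∀ n, g' n t = (t ^ n) • x ^ (n + 1) + (t ^ n) • y ^ (n + 1) -
        ((1 - 2 * t) * (t * (1 - t)) ^ n) • w ^ (n + 1) := by
      intro n
      simp only [hg'def, smul_add]
    calc (∑' n, g' n t)
        = ∑' n, ((t ^ n) • x ^ (n + 1) + (t ^ n) • y ^ (n + 1) -
            ((1 - 2 * t) * (t * (1 - t)) ^ n) • w ^ (n + 1)) := tsum_congr hfe
      _ = x * ga + y * gb - (1 - 2 * t) • (w * gc) := ((S1.add S2).sub S3).tsum_eq
      _ = 0 := by rw [hmain, sub_self]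
  -- the sum function is constant on `s`; evaluate at `0` and `1`
  have hconst : (∑' n, g n 1) = (∑' n, g n 0) := by
    have hmvt := Convex.norm_image_sub_le_of_norm_hasDerivWithin_le (C := 0)
      (f := fun u => ∑' n, g n u) (f' := fun t => ∑' n, g' n t) (s := s)
      (fun t ht => (hG t ht).hasDerivWithinAt)
      (fun t ht => by simp [hzero t ht]) (convex_Ioo _ _) h0s h1s
    simp only [zero_mul] at hmvt
    rw [← sub_eq_zero]
    exact norm_le_zero_iff.mp hmvt
  have hG0 : (∑' n, g n 0) = 0 := by
    rw [tsum_congr hgzero, tsum_zero]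
  have hG1 : (∑' n, g n 1) =
      (∑' n : ℕ, ((n : ℝ) + 1)⁻¹ • x ^ (n + 1)) + (∑' n : ℕ, ((n : ℝ) + 1)⁻¹ • y ^ (n + 1)) := by
    have key_bound : ∀ (v : A), ‖v‖ < 1 → ∀ n : ℕ, ‖((n : ℝ) + 1)⁻¹ • v ^ (n + 1)‖ ≤ ‖v‖ ^ n := by
      intro v hv n
      rw [norm_smul, Real.norm_eq_abs]
      calc |((n : ℝ) + 1)⁻¹| * ‖v ^ (n + 1)‖ ≤ 1 * ‖v‖ ^ (n + 1) := by
            apply mul_le_mul ?_ (norm_pow_le' _ n.succ_pos) (norm_nonneg _) zero_le_one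
            rw [abs_of_pos (by positivity)]
            exact inv_le_one_of_one_le₀ (le_add_of_nonneg_left (Nat.cast_nonneg n))
      _ = ‖v‖ ^ (n + 1) := one_mul _
      _ ≤ ‖v‖ ^ n := pow_le_pow_of_le_one (norm_nonneg _) hv.le (Nat.le_succ n)
    have hsx : Summable (fun n : ℕ => ((n : ℝ) + 1)⁻¹ • x ^ (n + 1)) :=
      Summable.of_norm_bounded (summable_geometric_of_lt_one (norm_nonneg x) hx)
        (key_bound x hx)
    have hsy : Summable (fun n : ℕ => ((n : ℝ) + 1)⁻¹ • y ^ (n + 1)) :=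
      Summable.of_norm_bounded (summable_geometric_of_lt_one (norm_nonneg y) hy)
        (key_bound y hy)
    have hg1 : ∀ n : ℕ, g n 1 =
        ((n : ℝ) + 1)⁻¹ • x ^ (n + 1) + ((n : ℝ) + 1)⁻¹ • y ^ (n + 1) := by
      intro n
      simp [hgdef, zero_pow (Nat.succ_ne_zero n), smul_add]
    rw [tsum_congr hg1, hsx.tsum_add hsy]
  rw [← hG1, hconst, hG0]

end Key

/-- The logarithm defined by the power series centered at 1. -/
noncomputable def blog {A : Type*} [NormedRing A] [NormedAlgebra ℂ A] (u : A) : A :=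
  -∑' n : ℕ, ((n : ℂ) + 1)⁻¹ • (1 - u) ^ (n + 1)

/-- `L_τ(u) = (1/(2πi)) τ(log u)`. -/
noncomputable def Ltau {A F : Type*} [NormedRing A] [NormedAlgebra ℂ A]
    [NormedAddCommGroup F] [NormedSpace ℂ F] (τ : A →L[ℂ] F) (u : A) : F :=
  (2 * (Real.pi : ℂ) * Complex.I)⁻¹ • τ (blog u)

/-- If `u` is invertible with `‖u - 1‖ < 1` and `‖u⁻¹ - 1‖ < 1`, then
`L_τ(u⁻¹) = -L_τ(u)`. -/
theorem Ltau_inv {A F : Type*} [NormedRing A] [NormedAlgebra ℂ A] [CompleteSpace A]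
    [NormedAddCommGroup F] [NormedSpace ℂ F] [CompleteSpace F]
    (τ : A →L[ℂ] F) (htr : ∀ x y : A, τ (x * y) = τ (y * x))
    (u : Aˣ) (hu : ‖(u : A) - 1‖ < 1) (hu' : ‖(↑u⁻¹ : A) - 1‖ < 1) :
    Ltau τ (↑u⁻¹ : A) = -Ltau τ (u : A) := by
  set x : A := 1 - (u : A) with hxdef
  set y : A := 1 - (↑u⁻¹ : A) with hydef
  have hx : ‖x‖ < 1 := by rw [hxdef, norm_sub_rev]; exact hu
  have hy : ‖y‖ < 1 := by rw [hydef, norm_sub_rev]; exact hu'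
  have hcuv : Commute (u : A) (↑u⁻¹ : A) := by
    rw [Commute, SemiconjBy, u.mul_inv, u.inv_mul]
  have hcxy : Commute x y :=
    Commute.sub_left (Commute.one_left _)
      (Commute.sub_right (Commute.one_right _) hcuv)
  have hrel : x + y = x * y := by
    rw [hxdef, hydef, sub_mul, one_mul, mul_sub, mul_one, u.mul_inv]
    abel
  have hkey := key_log_sum hcxy hx hy hrel
  -- convert the real smul to complex smul
  have hcast : ∀ (v : A) (n : ℕ), ((n : ℂ) + 1)⁻¹ • v = ((n : ℝ) + 1)⁻¹ • v := by
    intro v n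
    rw [← Complex.coe_smul]
    norm_num
  have hblog : ∀ v : A, blog v = -∑' n : ℕ, ((n : ℝ) + 1)⁻¹ • (1 - v) ^ (n + 1) := by
    intro v
    rw [blog]
    congr 1
    exact tsum_congr fun n => hcast _ n
  have hbu : blog (↑u⁻¹ : A) = -blog (u : A) := by
    rw [hblog, hblog, ← hxdef, ← hydef, neg_neg]
    exact neg_eq_of_add_eq_zero_left hkey
  rw [Ltau, Ltau, hbu, map_neg, smul_neg]
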